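/- arXiv:1705.05048 — 3 statements merged into one kernel-verified Lean document; each statement's English description precedes it below -/
import Mathlib

section
/- Let f(z) = 1/z + e^z, g(z) = 1/z − e^z/z and α(z) = 1/z, meromorphic on ℂ. Then f − α = e^z and g − α = −e^z/z have no zeros (so f and g share α CM in the sense of vanishing), but g(z) = (1 − e^z)/z has a removable singularity at z = 0 (with holomorphic extension taking the value −1 there) while f has a pole at z = 0; consequently f and g do not share α in the sense of value. -/
open Complex Topology
open scoped Classical

/-- The order of a meromorphic function at a point (junk value `0` if `f` is
not meromorphic at `z`).  Order `⊤` means `f ≡ 0` near `z`, a positive order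
is the multiplicity of a zero, a negative order is minus the multiplicity of
a pole. -/
noncomputable def morder (f : ℂ → ℂ) (z : ℂ) : WithTop ℤ :=
  if h : MeromorphicAt f z then meromorphicOrderAt f z else 0

/-- `f(z) = α(z)` in the sense of value: at a pole of `α` it means that `f`
also has a pole at `z`; elsewhere it means that the meromorphic function
`f - α` vanishes at `z`. -/
def ValueEqAt (f α : ℂ → ℂ) (z : ℂ) : Prop :=
  (morder α z < 0 ∧ morder f z < 0) ∨ (0 ≤ morder α z ∧ 0 < morder (f - α) z)

/-- `f` and `g` share the function `α` IM in the sense of value on `D`. -/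
def ShareIMValue (f g α : ℂ → ℂ) (D : Set ℂ) : Prop :=
  ∀ z ∈ D, (ValueEqAt f α z ↔ ValueEqAt g α z)

/-- `f` and `g` share the function `α` CM in the sense of value on `D`:
at points where `α` is finite the orders of the zeros of `f - α` and `g - α`
agree, and at poles of `α` the orders of the zeros of `1/f - 1/α` and
`1/g - 1/α` agree. -/
def ShareCMValue (f g α : ℂ → ℂ) (D : Set ℂ) : Prop :=
  ∀ z ∈ D,
    (0 ≤ morder α z → ∀ m : ℕ, 1 ≤ m →
      (morder (f - α) z = (m : ℤ) ↔ morder (g - α) z = (m : ℤ))) ∧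
    (morder α z < 0 → ∀ m : ℕ, 1 ≤ m →
      (morder (f⁻¹ - α⁻¹) z = (m : ℤ) ↔ morder (g⁻¹ - α⁻¹) z = (m : ℤ)))

/-- `f` and `g` share the function `α` IM in the sense of vanishing on `D`:
`f - α` and `g - α` have the same zeros (ignoring multiplicities). -/
def ShareIMVanishing (f g α : ℂ → ℂ) (D : Set ℂ) : Prop :=
  ∀ z ∈ D, (0 < morder (f - α) z ↔ 0 < morder (g - α) z)

/-- `f` and `g` share the function `α` CM in the sense of vanishing on `D`:
`f - α` and `g - α` have the same zeros with the same multiplicities. -/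
def ShareCMVanishing (f g α : ℂ → ℂ) (D : Set ℂ) : Prop :=
  ∀ z ∈ D, ∀ m : ℕ, 1 ≤ m →
    (morder (f - α) z = (m : ℤ) ↔ morder (g - α) z = (m : ℤ))

/-- If `f` agrees near `z` (off `z`) with `(· - z) ^ n * g` for `g` analytic and
nonvanishing at `z`, then `morder f z = n`. -/
lemma morder_eq_int {f : ℂ → ℂ} {z : ℂ} (h : MeromorphicAt f z) (n : ℤ)
    (g : ℂ → ℂ) (hg : AnalyticAt ℂ g z) (hgz : g z ≠ 0)
    (heq : ∀ᶠ w in 𝓝[≠] z, f w = (w - z) ^ n * g w) : morder f z = n := by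
  rw [morder, dif_pos h, (meromorphicOrderAt_eq_int_iff (n := n) h).mpr ⟨g, hg, hgz, by simpa [smul_eq_mul] using heq⟩]

/-- The holomorphic extension of `(1 - e^z)/z` across `0`. -/
noncomputable def Gfun : ℂ → ℂ := Function.update (fun w => (1 - exp w) / w) 0 (-1)

lemma Gfun_ne {w : ℂ} (hw : w ≠ 0) : Gfun w = (1 - exp w) / w :=
  Function.update_of_ne hw _ _

lemma Gfun_zero : Gfun 0 = -1 := Function.update_self _ _ _

lemma Gfun_analytic : AnalyticAt ℂ Gfun 0 := by
  apply Complex.analyticAt_of_differentiable_on_punctured_nhds_of_continuousAt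
  · filter_upwards [self_mem_nhdsWithin] with w hw
    have hw : w ≠ 0 := hw
    have h1 : DifferentiableAt ℂ (fun w : ℂ => (1 - exp w) / w) w :=
      ((differentiable_const _).sub Complex.differentiable_exp).differentiableAt.div
        differentiableAt_id hw
    apply h1.congr_of_eventuallyEq
    filter_upwards [isOpen_ne.mem_nhds hw] with x hx
    exact Gfun_ne hx
  · rw [← continuousWithinAt_compl_self]
    have hd : HasDerivAt exp 1 0 := by simpa using Complex.hasDerivAt_exp 0
    have hs := hasDerivAt_iff_tendsto_slope.mp hd
    have h2 : Filter.Tendsto (fun w => -slope exp 0 w) (𝓝[≠] (0:ℂ)) (𝓝 (-1)) := hs.neg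
    rw [ContinuousWithinAt, Gfun_zero]
    apply h2.congr'
    filter_upwards [self_mem_nhdsWithin] with w hw
    have hw : w ≠ 0 := hw
    rw [Gfun_ne hw, slope_def_field]
    field_simp
    rw [Complex.exp_zero, sub_zero]; ring

/-- Example 1: `f = 1/z + e^z` and `g = 1/z - e^z/z` share
`α = 1/z` CM in the sense of vanishing (the differences `e^z` and `-e^z/z`
have no zeros), but `g` has a removable singularity at `0` with extension
value `-1` while `f` has a pole at `0`; hence `f` and `g` do not share `α`
in the sense of value. -/
theorem example_one (f g α : ℂ → ℂ)
    (hfdef : f = fun z => z⁻¹ + exp z)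
    (hgdef : g = fun z => z⁻¹ - exp z / z)
    (hαdef : α = fun z => z⁻¹) :
    MeromorphicOn f Set.univ ∧ MeromorphicOn g Set.univ ∧
    MeromorphicOn α Set.univ ∧
    (∀ z, f z - α z = exp z) ∧
    (∀ z, g z - α z = -(exp z / z)) ∧
    (∀ z ≠ (0 : ℂ), g z = (1 - exp z) / z) ∧
    (∀ z, ¬ 0 < morder (f - α) z) ∧
    (∀ z, ¬ 0 < morder (g - α) z) ∧
    ShareCMVanishing f g α Set.univ ∧
    (∃ G : ℂ → ℂ, AnalyticAt ℂ G 0 ∧ G 0 = -1 ∧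
      ∀ᶠ z in 𝓝[≠] (0 : ℂ), g z = G z) ∧
    morder f 0 < 0 ∧
    ¬ ShareIMValue f g α Set.univ := by
  -- meromorphy
  have hαm : ∀ x : ℂ, MeromorphicAt α x := by
    rw [hαdef]; exact fun x => (MeromorphicAt.id x).inv
  have hfm : ∀ x : ℂ, MeromorphicAt f x := by
    rw [hfdef]; exact fun x => (MeromorphicAt.id x).inv.add analyticAt_cexp.meromorphicAt
  have hgm : ∀ x : ℂ, MeromorphicAt g x := by
    rw [hgdef]
    exact fun x => (MeromorphicAt.id x).inv.sub
      (analyticAt_cexp.meromorphicAt.div (MeromorphicAt.id x))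
  -- pointwise identities
  have hfa : f - α = exp := by
    funext z; simp only [Pi.sub_apply, hfdef, hαdef]; ring
  have hga : g - α = fun z => -(exp z / z) := by
    funext z; simp only [Pi.sub_apply, hgdef, hαdef]; ring
  have hgrepr : ∀ z ≠ (0:ℂ), g z = (1 - exp z) / z := by
    intro z hz; rw [hgdef]; field_simp
  -- orders
  have hfαo : ∀ z, morder (f - α) z = (0 : ℤ) := by
    intro z
    rw [hfa]
    refine morder_eq_int analyticAt_cexp.meromorphicAt 0 exp analyticAt_cexp (exp_ne_zero z) ?_
    filter_upwards with w; simp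
  have hgαo0 : morder (g - α) 0 = ((-1 : ℤ) : WithTop ℤ) := by
    rw [hga]
    refine morder_eq_int (analyticAt_cexp.meromorphicAt.div (MeromorphicAt.id 0)).neg (-1)
      (fun w => -exp w) analyticAt_cexp.neg (by simp [exp_ne_zero]) ?_
    filter_upwards [self_mem_nhdsWithin] with w hw
    have hw : w ≠ 0 := hw
    rw [sub_zero, zpow_neg_one]
    simp only [Pi.neg_apply, Pi.div_apply, id]
    field_simp
  have hgαoz : ∀ z ≠ (0:ℂ), morder (g - α) z = (0 : ℤ) := by
    intro z hz
    rw [hga]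
    refine morder_eq_int (analyticAt_cexp.meromorphicAt.div (MeromorphicAt.id z)).neg 0
      (fun w => -(exp w / w)) ((analyticAt_cexp.div analyticAt_id hz).neg)
      (by simp [div_ne_zero (exp_ne_zero z) hz]) ?_
    filter_upwards with w; simp
  have hαo0 : morder α 0 = ((-1 : ℤ) : WithTop ℤ) := by
    refine morder_eq_int (hαm 0) (-1) (fun _ => 1) analyticAt_const one_ne_zero ?_
    filter_upwards with w; rw [hαdef]; simp [zpow_neg_one]
  have hfo0 : morder f 0 = ((-1 : ℤ) : WithTop ℤ) := by
    refine morder_eq_int (hfm 0) (-1) (fun w => 1 + w * exp w)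
      (analyticAt_const.add (analyticAt_id.mul analyticAt_cexp)) (by simp) ?_
    filter_upwards [self_mem_nhdsWithin] with w hw
    have hw : w ≠ 0 := hw
    rw [hfdef, sub_zero, zpow_neg_one]
    field_simp
  have hgo0 : morder g 0 = (0 : ℤ) := by
    refine morder_eq_int (hgm 0) 0 Gfun Gfun_analytic (by rw [Gfun_zero]; norm_num) ?_
    filter_upwards [self_mem_nhdsWithin] with w hw
    have hw : w ≠ 0 := hw
    rw [sub_zero, zpow_zero, one_mul, Gfun_ne hw, hgrepr w hw]
  -- basic WithTop ℤ facts
  have hneg1lt0 : ((-1 : ℤ) : WithTop ℤ) < (0 : WithTop ℤ) := by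
    exact_mod_cast (by norm_num : (-1 : ℤ) < 0)
  refine ⟨fun x _ => hfm x, fun x _ => hgm x, fun x _ => hαm x,
    fun z => congrFun hfa z, fun z => congrFun hga z, hgrepr, ?_, ?_, ?_, ?_, ?_, ?_⟩
  · intro z
    rw [hfαo z]
    simp
  · intro z
    rcases eq_or_ne z 0 with rfl | hz
    · rw [hgαo0]
      exact fun h => absurd (lt_trans h hneg1lt0) (lt_irrefl _)
    · rw [hgαoz z hz]
      simp
  · intro z _ m hm
    constructor <;> intro h <;> exfalso
    · rw [hfαo z] at h
      have : (0 : ℤ) = (m : ℤ) := by exact_mod_cast h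
      omega
    · rcases eq_or_ne z 0 with rfl | hz
      · rw [hgαo0] at h
        have : (-1 : ℤ) = (m : ℤ) := by exact_mod_cast h
        omega
      · rw [hgαoz z hz] at h
        have : (0 : ℤ) = (m : ℤ) := by exact_mod_cast h
        omega
  · refine ⟨Gfun, Gfun_analytic, Gfun_zero, ?_⟩
    filter_upwards [self_mem_nhdsWithin] with w hw
    have hw : w ≠ 0 := hw
    rw [hgrepr w hw, Gfun_ne hw]
  · rw [hfo0]; exact hneg1lt0
  · intro h
    have hv : ValueEqAt f α 0 := Or.inl ⟨by rw [hαo0]; exact hneg1lt0,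
      by rw [hfo0]; exact hneg1lt0⟩
    rcases (h 0 trivial).mp hv with ⟨_, hg0⟩ | ⟨hα0, _⟩
    · rw [hgo0] at hg0
      exact absurd hg0 (by simp)
    · rw [hαo0] at hα0
      exact absurd (lt_of_le_of_lt hα0 hneg1lt0) (lt_irrefl _)
end

section
/- Let f(z) = 1/z + e^z, g(z) = 1/z + e^z/z and α(z) = 1/z, meromorphic on ℂ. Then f and g share α CM in the sense of vanishing (f − α = e^z and g − α = e^z/z have no zeros), but f/α − 1 = z e^z vanishes at z = 0 while g/α − 1 = e^z has no zeros; consequently f/α and g/α do not share the value 1, not even IM. -/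
open Complex Topology
open scoped Classical

private lemma morder_eq_of (F : ℂ → ℂ) (z : ℂ) (n : ℤ) (g : ℂ → ℂ)
    (hg : AnalyticAt ℂ g z) (hgz : g z ≠ 0)
    (hev : ∀ᶠ w in 𝓝[≠] z, F w = (w - z) ^ n * g w) :
    morder F z = n := by
  have h1 : MeromorphicAt (fun w => (w - z) ^ n) z :=
    ((MeromorphicAt.id z).sub (MeromorphicAt.const z z)).zpow n
  have h2 : MeromorphicAt (fun w => (w - z) ^ n * g w) z := h1.mul hg.meromorphicAt
  have hm : MeromorphicAt F z := h2.congr (Filter.EventuallyEq.symm hev)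
  rw [morder, dif_pos hm]
  exact (meromorphicOrderAt_eq_int_iff hm).mpr ⟨g, hg, hgz, by simpa [smul_eq_mul] using hev⟩

private lemma eventually_ne_zero (z : ℂ) : ∀ᶠ w in 𝓝[≠] z, w ≠ 0 := by
  rcases eq_or_ne z 0 with rfl | hz
  · exact eventually_mem_nhdsWithin
  · exact Filter.Eventually.filter_mono nhdsWithin_le_nhds
      (isOpen_compl_singleton.eventually_mem hz)

/-- Example 5: `f = 1/z + e^z` and `g = 1/z + e^z/z` share
`α = 1/z` CM in the sense of vanishing, but `f/α - 1 = z e^z` vanishes at `0`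
while `g/α - 1 = e^z` has no zeros; hence `f/α` and `g/α` do not share the
value `1`, not even IM. -/
theorem example_five (f g α : ℂ → ℂ)
    (hfdef : f = fun z => z⁻¹ + exp z)
    (hgdef : g = fun z => z⁻¹ + exp z / z)
    (hαdef : α = fun z => z⁻¹) :
    (∀ z, ¬ 0 < morder (f - α) z) ∧
    (∀ z, ¬ 0 < morder (g - α) z) ∧
    ShareCMVanishing f g α Set.univ ∧
    (∀ z ≠ (0 : ℂ), f z / α z - 1 = z * exp z) ∧
    (∀ z ≠ (0 : ℂ), g z / α z - 1 = exp z) ∧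
    0 < morder (f / α - 1) 0 ∧
    (∀ z, ¬ 0 < morder (g / α - 1) z) ∧
    ¬ ShareIMVanishing (f / α) (g / α) 1 Set.univ := by

  have hfa : f - α = exp := by
    funext z; simp [hfdef, hαdef]
  have hga : g - α = fun z => exp z / z := by
    funext z; simp [hgdef, hαdef]
  -- order of f - α is 0 everywhere
  have hford : ∀ z, morder (f - α) z = (0 : ℤ) := by
    intro z
    rw [hfa]
    exact morder_eq_of _ z 0 exp analyticAt_cexp (exp_ne_zero z)
      (by filter_upwards with w; simp)
  -- order of g - α is 0 away from 0, and -1 at 0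
  have hgord : ∀ z, morder (g - α) z = (0 : ℤ) ∨ morder (g - α) z = (-1 : ℤ) := by
    intro z
    rcases eq_or_ne z 0 with rfl | hz
    · right
      rw [hga]
      refine morder_eq_of _ 0 (-1) exp analyticAt_cexp (exp_ne_zero 0) ?_
      filter_upwards [eventually_ne_zero 0] with w hw
      rw [sub_zero, zpow_neg_one, div_eq_mul_inv, mul_comm]
    · left
      rw [hga]
      refine morder_eq_of _ z 0 (fun w => exp w / w)
        (analyticAt_cexp.div analyticAt_id hz) (div_ne_zero (exp_ne_zero z) hz) ?_
      filter_upwards with w; simp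
  have hfz : ∀ z ≠ (0 : ℂ), f z / α z - 1 = z * exp z := by
    intro z hz
    rw [hfdef, hαdef]
    field_simp
    ring
  have hgz : ∀ z ≠ (0 : ℂ), g z / α z - 1 = exp z := by
    intro z hz
    rw [hgdef, hαdef]
    field_simp
    ring
  -- f/α - 1 has order 1 at 0
  have hF : morder (f / α - 1) 0 = (1 : ℤ) := by
    refine morder_eq_of _ 0 1 exp analyticAt_cexp (exp_ne_zero 0) ?_
    filter_upwards [eventually_ne_zero 0] with w hw
    have : (f / α - 1) w = f w / α w - 1 := rfl
    rw [this, hfz w hw, sub_zero, zpow_one]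
  -- g/α - 1 has order 0 everywhere
  have hG : ∀ z, morder (g / α - 1) z = (0 : ℤ) := by
    intro z
    refine morder_eq_of _ z 0 exp analyticAt_cexp (exp_ne_zero z) ?_
    filter_upwards [eventually_ne_zero z] with w hw
    have : (g / α - 1) w = g w / α w - 1 := rfl
    rw [this, hgz w hw]
    simp
  refine ⟨?_, ?_, ?_, hfz, hgz, ?_, ?_, ?_⟩
  · intro z h
    rw [hford z] at h
    simp at h
  · intro z h
    rcases hgord z with h' | h' <;> rw [h'] at h <;> simp at h
    · exact absurd h (by decide)
  · intro z _ m hm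
    constructor
    · intro h; rw [hford z] at h
      exfalso
      have : (0 : ℤ) = (m : ℤ) := by exact_mod_cast h
      omega
    · intro h
      exfalso
      rcases hgord z with h' | h' <;> rw [h'] at h
      · have : (0 : ℤ) = (m : ℤ) := by exact_mod_cast h
        omega
      · have : (-1 : ℤ) = (m : ℤ) := by exact_mod_cast h
        omega
  · rw [hF]; decide
  · intro z h
    rw [hG z] at h
    simp at h
  · intro hsh
    have := hsh 0 (Set.mem_univ 0)
    rw [ShareIMVanishing] at hsh
    have h0 := hsh 0 (Set.mem_univ 0)
    have h1 : (f / α - (1 : ℂ → ℂ)) = (f / α - 1) := rfl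
    have hpos : 0 < morder (f / α - 1) 0 := by rw [hF]; decide
    have := h0.mp hpos
    rw [hG 0] at this
    simp at this
end

section
/- Let f(z) = 1/sin z + e^{z²}, g(z) = (1 + e^{z²})/sin z and α(z) = 1/sin z, meromorphic on ℂ. Then f − α = e^{z²} and g − α = e^{z²}/sin z have no zeros (so f and g share α CM in the sense of vanishing), but f/α − 1 = e^{z²} sin z vanishes at every point of πℤ (infinitely many points) while g/α − 1 = e^{z²} has no zeros; consequently f/α and g/α do not share the value 1, not even IM, and the sharing fails at infinitely many points. -/
open Complex Topology
open scoped Classical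

section helpers
open Filter

lemma sin_factor (a : ℂ) (ha : Complex.sin a = 0) :
    ∃ gs : ℂ → ℂ, AnalyticAt ℂ gs a ∧ gs a ≠ 0 ∧ ∀ z, Complex.sin z = (z - a) * gs z := by
  refine ⟨dslope Complex.sin a, ?_, ?_, ?_⟩
  · obtain ⟨p, hp⟩ := Complex.differentiable_sin.analyticAt a
    exact ⟨p.fslope, hp.has_fpower_series_dslope_fslope⟩
  · rw [dslope_same, Complex.deriv_sin]
    intro h
    have h2 := Complex.sin_sq_add_cos_sq a
    rw [ha, h] at h2; simp at h2
  · intro z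
    rcases eq_or_ne z a with rfl | hz
    · simp [ha]
    · rw [dslope_of_ne _ hz, slope_def_field]
      field_simp [sub_ne_zero.mpr hz, ha]
      simp [ha]

lemma eventually_sin_ne (a : ℂ) : ∀ᶠ z in 𝓝[≠] a, Complex.sin z ≠ 0 := by
  rcases eq_or_ne (Complex.sin a) 0 with ha | ha
  · obtain ⟨gs, hgs, hgsa, hfac⟩ := sin_factor a ha
    have h1 : ∀ᶠ z in 𝓝[≠] a, gs z ≠ 0 :=
      (hgs.continuousAt.eventually_ne hgsa).filter_mono nhdsWithin_le_nhds
    filter_upwards [h1, self_mem_nhdsWithin] with z h1 h2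
    rw [hfac z]
    exact mul_ne_zero (sub_ne_zero.mpr h2) h1
  · exact (Complex.continuous_sin.continuousAt.eventually_ne ha).filter_mono nhdsWithin_le_nhds

lemma morder_eq (F : ℂ → ℂ) (a : ℂ) (n : ℤ) (g : ℂ → ℂ) (hg : AnalyticAt ℂ g a)
    (hga : g a ≠ 0) (h : ∀ᶠ z in 𝓝[≠] a, F z = (z - a) ^ n * g z) :
    morder F a = n := by
  have hm : MeromorphicAt F a := by
    rw [MeromorphicAt.iff_eventuallyEq_zpow_smul_analyticAt]
    exact ⟨n, g, hg, by simpa [smul_eq_mul] using h⟩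
  rw [morder, dif_pos hm, (meromorphicOrderAt_eq_int_iff hm (n := n)).mpr ⟨g, hg, hga, by simpa [smul_eq_mul] using h⟩]

lemma analyticAt_exp_sq (a : ℂ) : AnalyticAt ℂ (fun z => Complex.exp (z ^ 2)) a :=
  analyticAt_cexp.comp ((analyticAt_id).pow 2)

end helpers

/-- Example 6: `f = 1/sin z + e^{z²}` and `g = (1 + e^{z²})/sin z`
share `α = 1/sin z` CM in the sense of vanishing, but `f/α - 1 = e^{z²} sin z`
vanishes at every point of `πℤ` (infinitely many points) while
`g/α - 1 = e^{z²}` has no zeros; hence `f/α` and `g/α` do not share the value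
`1`, not even IM. -/
theorem example_six (f g α : ℂ → ℂ)
    (hfdef : f = fun z => (Complex.sin z)⁻¹ + exp (z ^ 2))
    (hgdef : g = fun z => (1 + exp (z ^ 2)) / Complex.sin z)
    (hαdef : α = fun z => (Complex.sin z)⁻¹) :
    (∀ z : ℂ, Complex.sin z = 0 ↔ ∃ k : ℤ, z = (k : ℂ) * Real.pi) ∧
    (∀ z, f z - α z = exp (z ^ 2)) ∧
    (∀ z, g z - α z = exp (z ^ 2) / Complex.sin z) ∧
    (∀ z, ¬ 0 < morder (f - α) z) ∧
    (∀ z, ¬ 0 < morder (g - α) z) ∧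
    ShareCMVanishing f g α Set.univ ∧
    (∀ z, Complex.sin z ≠ 0 → f z / α z - 1 = exp (z ^ 2) * Complex.sin z) ∧
    (∀ z, Complex.sin z ≠ 0 → g z / α z - 1 = exp (z ^ 2)) ∧
    (∀ k : ℤ, 0 < morder (f / α - 1) ((k : ℂ) * Real.pi)) ∧
    (∀ z, ¬ 0 < morder (g / α - 1) z) ∧
    Set.Infinite {z : ℂ | 0 < morder (f / α - 1) z ∧ ¬ 0 < morder (g / α - 1) z} ∧
    ¬ ShareIMVanishing (f / α) (g / α) 1 Set.univ := by
  -- pointwise identities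
  have hfsub : f - α = fun z => exp (z ^ 2) := by
    funext z; simp only [Pi.sub_apply, hfdef, hαdef]; ring
  have hgsub : g - α = fun z => exp (z ^ 2) / Complex.sin z := by
    funext z
    simp only [Pi.sub_apply, hgdef, hαdef]
    rcases eq_or_ne (Complex.sin z) 0 with h | h
    · simp [h]
    · field_simp
      ring
  have hfq : ∀ z, Complex.sin z ≠ 0 → f z / α z - 1 = exp (z ^ 2) * Complex.sin z := by
    intro z hz
    simp only [hfdef, hαdef]
    field_simp
    ring
  have hgq : ∀ z, Complex.sin z ≠ 0 → g z / α z - 1 = exp (z ^ 2) := by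
    intro z hz
    simp only [hgdef, hαdef]
    field_simp
    ring
  -- order computations
  have h4 : ∀ z, morder (f - α) z = 0 := by
    intro z
    rw [hfsub]
    exact morder_eq _ z 0 _ (analyticAt_exp_sq z) (Complex.exp_ne_zero _)
      (Filter.Eventually.of_forall fun w => by simp)
  have h5 : ∀ z, morder (g - α) z = 0 ∨ morder (g - α) z = -1 := by
    intro z
    rw [hgsub]
    rcases eq_or_ne (Complex.sin z) 0 with h | h
    · right
      obtain ⟨gs, hgs, hgsa, hfac⟩ := sin_factor z h
      refine morder_eq _ z (-1) (fun w => exp (w ^ 2) / gs w)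
        ((analyticAt_exp_sq z).div hgs hgsa)
        (div_ne_zero (Complex.exp_ne_zero _) hgsa)
        (Filter.Eventually.of_forall fun w => ?_)
      rw [hfac w, zpow_neg_one, div_mul_eq_div_div_swap, div_eq_inv_mul]
    · left
      refine morder_eq _ z 0 (fun w => exp (w ^ 2) / Complex.sin w)
        ((analyticAt_exp_sq z).div (Complex.differentiable_sin.analyticAt z) h)
        (div_ne_zero (Complex.exp_ne_zero _) h)
        (Filter.Eventually.of_forall fun w => by simp)
  have h9 : ∀ k : ℤ, morder (f / α - 1) ((k : ℂ) * Real.pi) = 1 := by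
    intro k
    set a : ℂ := (k : ℂ) * Real.pi with ha
    have hsa : Complex.sin a = 0 := Complex.sin_eq_zero_iff.mpr ⟨k, rfl⟩
    obtain ⟨gs, hgs, hgsa, hfac⟩ := sin_factor a hsa
    refine morder_eq _ a 1 (fun w => exp (w ^ 2) * gs w)
      ((analyticAt_exp_sq a).mul hgs)
      (mul_ne_zero (Complex.exp_ne_zero _) hgsa) ?_
    filter_upwards [eventually_sin_ne a] with w hw
    have : (f / α - 1) w = exp (w ^ 2) * Complex.sin w := by
      simpa using hfq w hw
    rw [this, hfac w, zpow_one]; ring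
  have h10 : ∀ z, morder (g / α - 1) z = 0 := by
    intro z
    refine morder_eq _ z 0 (fun w => exp (w ^ 2)) (analyticAt_exp_sq z)
      (Complex.exp_ne_zero _) ?_
    filter_upwards [eventually_sin_ne z] with w hw
    have : (g / α - 1) w = exp (w ^ 2) := by simpa using hgq w hw
    rw [this]; simp
  have h9' : ∀ k : ℤ, 0 < morder (f / α - 1) ((k : ℂ) * Real.pi) := by
    intro k; rw [h9 k]; exact_mod_cast zero_lt_one
  have h10' : ∀ z, ¬ 0 < morder (g / α - 1) z := by
    intro z; rw [h10 z]; exact lt_irrefl 0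
  refine ⟨fun z => Complex.sin_eq_zero_iff, ?_, ?_, ?_, ?_, ?_, hfq, hgq, h9', h10', ?_, ?_⟩
  · intro z; have := congrFun hfsub z; simpa using this
  · intro z; have := congrFun hgsub z; simpa using this
  · intro z; rw [h4 z]; exact lt_irrefl 0
  · intro z
    rcases h5 z with h | h <;> rw [h]
    · exact lt_irrefl 0
    · intro hc; exact absurd hc (by decide)
  · intro z _ m hm
    have hm0 : ((m : ℤ) : WithTop ℤ) ≠ 0 := by
      exact_mod_cast (by omega : (m : ℤ) ≠ 0)
    have hm1 : ((m : ℤ) : WithTop ℤ) ≠ -1 := by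
      intro hc
      rw [show (-1 : WithTop ℤ) = ((-1 : ℤ) : WithTop ℤ) from rfl] at hc
      exact (by omega : (m : ℤ) ≠ -1) (by exact_mod_cast hc)
    constructor
    · intro h; rw [h4 z] at h; exact absurd h.symm hm0
    · intro h
      rcases h5 z with h' | h' <;> rw [h'] at h
      · exact absurd h.symm hm0
      · exact absurd h.symm hm1
  · apply Set.infinite_of_injective_forall_mem
      (f := fun k : ℤ => (k : ℂ) * Real.pi)
    · intro a b hab
      have hπ : (Real.pi : ℂ) ≠ 0 := by
        exact_mod_cast Real.pi_ne_zero
      exact_mod_cast mul_right_cancel₀ hπ hab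
    · intro k
      exact ⟨h9' k, h10' _⟩
  · intro hsh
    have h := (hsh ((1 : ℤ) * Real.pi : ℂ) (Set.mem_univ _)).mp (h9' 1)
    exact h10' _ h
end
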